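/- For every integer n ≥ 1 and real θ, the n-fold iterated integral ∫₁^θ ∫₁^{θx₁} ⋯ ∫₁^{θx_{n-1}} dx₁⋯dx_n equals (θ-1)^n J_{n+1}(θ)/n!, where J_n are the Mallows–Riordan polynomials. -/

import Mathlib

open Polynomial MeasureTheory

/-- Mallows–Riordan polynomials `J n`, via the Kreweras recursion
`J (n+2) = ∑_{i=0}^n C(n,i) (1+θ+⋯+θ^i) J (i+1) J (n+1-i)`, `J 1 = 1`. -/
noncomputable def MRJ : ℕ → Polynomial ℚ
  | 0 => 0
  | 1 => 1
  | n + 2 =>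
      ∑ i ∈ (Finset.range (n + 1)).attach,
        (n.choose i.1 : Polynomial ℚ) * (∑ j ∈ Finset.range (i.1 + 1), X ^ j) *
          MRJ (i.1 + 1) * MRJ (n + 1 - i.1)
  decreasing_by
  · have := Finset.mem_range.mp i.2; omega
  · omega

/-- The iterated integral `∫₁^{θ t} ∫₁^{θ x₁} ⋯ ∫₁^{θ x_{n-1}} dx₁ ⋯ dx_n`
(as a function of the outer upper-limit parameter `t`). -/
noncomputable def iterInt (θ : ℝ) : ℕ → ℝ → ℝ
  | 0, _ => 1
  | n + 1, t => ∫ x in (1 : ℝ)..(θ * t), iterInt θ n x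

section MallowsRiordanAux

open PowerSeries

noncomputable def bSeq (θ : ℝ) : ℕ → ℝ
  | 0 => 1
  | n + 1 => -∑ k ∈ (Finset.range (n + 1)).attach,
      θ ^ ((k.1 + 1).choose 2) / (k.1 + 1).factorial * bSeq θ (n - k.1)
  decreasing_by omega

lemma bSeq_succ (θ : ℝ) (n : ℕ) : bSeq θ (n + 1) =
    -∑ k ∈ Finset.range (n + 1),
      θ ^ ((k + 1).choose 2) / (k + 1).factorial * bSeq θ (n - k) := by
  rw [bSeq.eq_def]
  exact congrArg Neg.neg (Finset.sum_attach (Finset.range (n+1))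
      (fun k => θ ^ ((k + 1).choose 2) / (k + 1).factorial * bSeq θ (n - k)))

noncomputable def cSeq (θ : ℝ) (n : ℕ) : ℝ :=
  ∑ k ∈ Finset.range (n + 1), θ ^ ((k + 1).choose 2) / k.factorial * bSeq θ (n - k)

noncomputable def Fps (θ : ℝ) : PowerSeries ℝ :=
  PowerSeries.mk fun n => θ ^ (n.choose 2) / n.factorial

lemma FB (θ : ℝ) : Fps θ * PowerSeries.mk (bSeq θ) = 1 := by
  ext n
  rw [PowerSeries.coeff_mul, Finset.Nat.sum_antidiagonal_eq_sum_range_succ_mk]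
  match n with
  | 0 => simp [Fps, bSeq]
  | m + 1 =>
    rw [Finset.sum_range_succ']
    simp only [Fps, coeff_mk, PowerSeries.coeff_one, Nat.sub_zero, Nat.succ_sub_succ]
    rw [bSeq_succ]
    simp

lemma coeff_derivativeFun' (f : PowerSeries ℝ) (n : ℕ) :
    PowerSeries.coeff n f.derivativeFun = PowerSeries.coeff (n + 1) f * (n + 1) :=
  coeff_derivative f n

lemma derivFps (θ : ℝ) : (Fps θ).derivativeFun = rescale θ (Fps θ) := by
  ext n
  rw [coeff_derivativeFun', coeff_rescale]
  simp only [Fps, coeff_mk]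
  have h1 : (n + 1).choose 2 = n + n.choose 2 := by
    rw [Nat.choose_succ_succ]; simp
  have h2 : ((n + 1).factorial : ℝ) = (n + 1) * n.factorial := by
    push_cast [Nat.factorial_succ]; ring
  rw [h1, h2, pow_add]
  have : (n.factorial : ℝ) ≠ 0 := Nat.cast_ne_zero.mpr n.factorial_ne_zero
  have h3 : ((n:ℝ) + 1) ≠ 0 := by positivity
  field_simp

lemma Cdef (θ : ℝ) : PowerSeries.mk (cSeq θ) = (Fps θ).derivativeFun * PowerSeries.mk (bSeq θ) := by
  ext n
  rw [PowerSeries.coeff_mul, Finset.Nat.sum_antidiagonal_eq_sum_range_succ_mk, coeff_mk]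
  unfold cSeq
  refine Finset.sum_congr rfl fun k _ => ?_
  rw [coeff_derivativeFun']
  simp only [Fps, coeff_mk, coeff_mk]
  have h2 : ((k + 1).factorial : ℝ) = (k + 1) * k.factorial := by
    push_cast [Nat.factorial_succ]; ring
  have : (k.factorial : ℝ) ≠ 0 := Nat.cast_ne_zero.mpr k.factorial_ne_zero
  have h3 : ((k:ℝ) + 1) ≠ 0 := by positivity
  rw [h2]
  field_simp

lemma derivativeFun_rescale (a : ℝ) (f : PowerSeries ℝ) :
    (rescale a f).derivativeFun = a • rescale a f.derivativeFun := by
  ext n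
  rw [coeff_derivativeFun', PowerSeries.coeff_smul, coeff_rescale, coeff_rescale,
    coeff_derivativeFun', smul_eq_mul]
  ring

lemma Fne (θ : ℝ) : Fps θ ≠ 0 := by
  intro h
  have : PowerSeries.constantCoeff (Fps θ) = 1 := by simp [Fps]
  rw [h] at this; simp at this

lemma helperPS (θ : ℝ) (C F : PowerSeries ℝ) (hF : F ≠ 0)
    (hCF : C * F = F.derivativeFun) (hFd : F.derivativeFun = rescale θ F) :
    C.derivativeFun = (θ • rescale θ C - C) * C := by
  have key : C.derivativeFun * F = ((θ • rescale θ C - C) * C) * F := by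
    have h1 : (C * F).derivativeFun = (rescale θ F).derivativeFun := by
      rw [hCF, hFd]
    rw [derivativeFun_mul, derivativeFun_rescale] at h1
    have h2 : rescale θ F.derivativeFun = rescale θ C * F.derivativeFun := by
      rw [← hCF, map_mul, ← hFd, ← hCF]
    rw [h2] at h1
    rw [smul_eq_mul, smul_eq_mul, ← hCF] at h1
    have h4 : θ • (rescale θ C * (C * F)) = (θ • rescale θ C) * (C * F) := by
      rw [smul_mul_assoc]
    rw [h4] at h1
    have h5 : F * C.derivativeFun = (θ • rescale θ C) * (C * F) - C * (C * F) := by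
      rw [← h1]; ring
    rw [mul_comm C.derivativeFun F, h5]; ring
  exact mul_right_cancel₀ hF key

lemma mainPS (θ : ℝ) : (PowerSeries.mk (cSeq θ)).derivativeFun =
    (θ • rescale θ (PowerSeries.mk (cSeq θ)) - PowerSeries.mk (cSeq θ)) *
      PowerSeries.mk (cSeq θ) := by
  refine helperPS θ _ _ (Fne θ) ?_ (derivFps θ)
  rw [Cdef, mul_assoc, mul_comm (PowerSeries.mk (bSeq θ)) (Fps θ), FB, mul_one]

lemma cRec (θ : ℝ) (n : ℕ) : (n + 1 : ℝ) * cSeq θ (n + 1) =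
    ∑ i ∈ Finset.range (n + 1), (θ ^ (i + 1) - 1) * cSeq θ i * cSeq θ (n - i) := by
  have := congrArg (PowerSeries.coeff n) (mainPS θ)
  rw [coeff_derivativeFun', coeff_mk, PowerSeries.coeff_mul,
    Finset.Nat.sum_antidiagonal_eq_sum_range_succ_mk] at this
  rw [mul_comm, this]
  refine Finset.sum_congr rfl fun i _ => ?_
  simp only [map_sub, PowerSeries.coeff_smul, coeff_rescale, coeff_mk, smul_eq_mul]
  ring

noncomputable def dSeq (θ : ℝ) (n : ℕ) : ℝ :=
  (θ - 1) ^ n * (Polynomial.aeval θ (MRJ (n + 1)) : ℝ) / n.factorial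

lemma dRec (θ : ℝ) (n : ℕ) : (n + 1 : ℝ) * dSeq θ (n + 1) =
    ∑ i ∈ Finset.range (n + 1), (θ ^ (i + 1) - 1) * dSeq θ i * dSeq θ (n - i) := by
  unfold dSeq
  rw [MRJ.eq_def]
  simp only []
  rw [Finset.sum_attach (Finset.range (n+1)) (fun i => (n.choose i : Polynomial ℚ) *
      (∑ j ∈ Finset.range (i + 1), Polynomial.X ^ j) * MRJ (i + 1) * MRJ (n + 1 - i))]
  simp only [map_sum]
  rw [Finset.mul_sum, Finset.sum_div, Finset.mul_sum]
  refine Finset.sum_congr rfl fun i hi => ?_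
  have hin : i ≤ n := by have := Finset.mem_range.mp hi; omega
  have hidx : n + 1 - i = n - i + 1 := by omega
  rw [hidx]
  simp only [map_mul, map_natCast, map_sum, map_pow, Polynomial.aeval_X]
  have hgeom : (∑ j ∈ Finset.range (i + 1), θ ^ j) * (θ - 1) = θ ^ (i + 1) - 1 :=
    geom_sum_mul θ (i + 1)
  have hch : (n.choose i : ℝ) = n.factorial / (i.factorial * (n - i).factorial) :=
    Nat.cast_choose ℝ hin
  have hfact : ((n + 1).factorial : ℝ) = (n + 1) * n.factorial := by
    push_cast [Nat.factorial_succ]; ring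
  have h1 : (n.factorial : ℝ) ≠ 0 := Nat.cast_ne_zero.mpr n.factorial_ne_zero
  have h2 : (i.factorial : ℝ) ≠ 0 := Nat.cast_ne_zero.mpr i.factorial_ne_zero
  have h3 : ((n - i).factorial : ℝ) ≠ 0 := Nat.cast_ne_zero.mpr (n - i).factorial_ne_zero
  have h4 : ((n : ℝ) + 1) ≠ 0 := by positivity
  have hpow : (θ - 1) ^ (n + 1) = (θ - 1) ^ i * (θ - 1) ^ (n - i) * (θ - 1) := by
    rw [← pow_add, ← pow_succ]; congr 1; omega
  rw [hch, hfact, hpow, ← hgeom]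
  field_simp

lemma cSeq_zero (θ : ℝ) : cSeq θ 0 = 1 := by simp [cSeq, bSeq]

lemma dSeq_zero (θ : ℝ) : dSeq θ 0 = 1 := by simp [dSeq, MRJ]

lemma c_eq_d (θ : ℝ) (n : ℕ) : cSeq θ n = dSeq θ n := by
  induction n using Nat.strong_induction_on with
  | _ n ih =>
    match n with
    | 0 => rw [cSeq_zero, dSeq_zero]
    | n + 1 =>
      have hc := cRec θ n
      have hd := dRec θ n
      have hs : ∑ i ∈ Finset.range (n + 1), (θ ^ (i + 1) - 1) * cSeq θ i * cSeq θ (n - i)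
          = ∑ i ∈ Finset.range (n + 1), (θ ^ (i + 1) - 1) * dSeq θ i * dSeq θ (n - i) := by
        refine Finset.sum_congr rfl fun i hi => ?_
        have h := Finset.mem_range.mp hi
        rw [ih i (by omega), ih (n - i) (by omega)]
      have h4 : ((n : ℝ) + 1) ≠ 0 := by positivity
      have := hc.trans (hs.trans hd.symm)
      exact mul_left_cancel₀ h4 this

lemma iterInt_eq (θ : ℝ) (n : ℕ) (t : ℝ) : iterInt θ n t =
    ∑ k ∈ Finset.range (n + 1),
      θ ^ ((k + 1).choose 2) / k.factorial * bSeq θ (n - k) * t ^ k := by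
  induction n generalizing t with
  | zero => simp [iterInt, bSeq]
  | succ n ih =>
    rw [show iterInt θ (n+1) t = ∫ x in (1:ℝ)..(θ*t), iterInt θ n x from rfl]
    have hint : ∀ (k : ℕ) (c : ℝ), IntervalIntegrable (fun x : ℝ => c * x ^ k)
        MeasureTheory.volume 1 (θ * t) :=
      fun k c => ((continuous_const.mul (continuous_pow k)).intervalIntegrable _ _)
    calc (∫ x in (1:ℝ)..(θ*t), iterInt θ n x)
        = ∫ x in (1:ℝ)..(θ*t), ∑ k ∈ Finset.range (n + 1),
            θ ^ ((k + 1).choose 2) / k.factorial * bSeq θ (n - k) * x ^ k := by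
          refine intervalIntegral.integral_congr fun x _ => ih x
      _ = ∑ k ∈ Finset.range (n + 1),
            θ ^ ((k + 1).choose 2) / k.factorial * bSeq θ (n - k) *
              (((θ*t) ^ (k+1) - 1 ^ (k+1)) / (k+1)) := by
          rw [intervalIntegral.integral_finset_sum (fun k _ => hint k _)]
          refine Finset.sum_congr rfl fun k _ => ?_
          rw [intervalIntegral.integral_const_mul, integral_pow]
      _ = ∑ k ∈ Finset.range (n + 2),
            θ ^ ((k + 1).choose 2) / k.factorial * bSeq θ (n + 1 - k) * t ^ k := by
          rw [Finset.sum_range_succ' (fun k =>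
            θ ^ ((k + 1).choose 2) / k.factorial * bSeq θ (n + 1 - k) * t ^ k) (n+1)]
          simp only [Nat.sub_zero, Nat.succ_sub_succ, pow_zero, mul_one]
          have hsplit : ∀ k ∈ Finset.range (n+1),
              θ ^ ((k + 1).choose 2) / k.factorial * bSeq θ (n - k) *
                (((θ*t) ^ (k+1) - 1 ^ (k+1)) / (k+1))
              = θ ^ ((k + 1 + 1).choose 2) / (k+1).factorial * bSeq θ (n - k) * t ^ (k+1)
                + (-(θ ^ ((k + 1).choose 2) / (k+1).factorial * bSeq θ (n - k))) := by
            intro k _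
            have e1 : (k + 1 + 1).choose 2 = (k+1).choose 2 + (k + 1) := by
              rw [Nat.choose_succ_succ (k+1) 1]
              simp [Nat.choose_one_right, Nat.add_comm]
            have e2 : ((k + 1).factorial : ℝ) = (k + 1) * k.factorial := by
              push_cast [Nat.factorial_succ]; ring
            have h2 : (k.factorial : ℝ) ≠ 0 := Nat.cast_ne_zero.mpr k.factorial_ne_zero
            have h3 : ((k:ℝ) + 1) ≠ 0 := by positivity
            rw [e1, e2, pow_add, mul_pow]
            field_simp
            ring
          rw [Finset.sum_congr rfl hsplit, Finset.sum_add_distrib]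
          congr 1
          rw [Finset.sum_neg_distrib, ← bSeq_succ θ n]
          norm_num
      _ = _ := rfl

end MallowsRiordanAux

theorem iterated_integral_eq_mallowsRiordan (n : ℕ) (hn : 1 ≤ n) (θ : ℝ) :
    iterInt θ n 1 = (θ - 1) ^ n * (Polynomial.aeval θ (MRJ (n + 1)) : ℝ) / n.factorial := by
  have h : iterInt θ n 1 = cSeq θ n := by
    rw [iterInt_eq]; simp [cSeq]
  rw [h, c_eq_d]
  rfl
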